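/- arXiv:2401.07827 — 2 statements merged into one kernel-verified Lean document; each statement's English description precedes it below -/
import Mathlib

section
/- For p = 2 the sequence |L_2|_{≤n}/|M|_{≤n} has limit 4/5 along even n and limit 1/5 along odd n; in particular the density δ(L_2 : M) does not exist. -/
open Filter

def FreeMagma.len {α : Type*} : FreeMagma α → ℕ
  | FreeMagma.of _ => 1
  | FreeMagma.mul x y => x.len + y.len

noncomputable def cnt {α : Type*} (X : Set (FreeMagma α)) (n : ℕ) : ℕ :=
  Nat.card {x : FreeMagma α // x ∈ X ∧ x.len = n}

noncomputable def cntLe {α : Type*} (X : Set (FreeMagma α)) (n : ℕ) : ℕ :=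
  Nat.card {x : FreeMagma α // x ∈ X ∧ x.len ≤ n}

/-! ### Combinatorics: counting `FreeMagma Unit` via binary trees -/

private def toT : FreeMagma Unit → Tree Unit
  | .of _ => .nil
  | .mul x y => .node () (toT x) (toT y)

private def ofT : Tree Unit → FreeMagma Unit
  | .nil => .of ()
  | .node _ l r => .mul (ofT l) (ofT r)

private lemma ofT_toT : ∀ x, ofT (toT x) = x
  | .of _ => rfl
  | .mul x y => by simp [toT, ofT, ofT_toT x, ofT_toT y]

private lemma toT_ofT : ∀ t, toT (ofT t) = t
  | .nil => rfl
  | .node _ l r => by simp [toT, ofT, toT_ofT l, toT_ofT r]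

private def magmaTreeEquiv : FreeMagma Unit ≃ Tree Unit where
  toFun := toT
  invFun := ofT
  left_inv := ofT_toT
  right_inv := toT_ofT

private lemma len_toT : ∀ x : FreeMagma Unit, x.len = (toT x).numNodes + 1
  | .of _ => rfl
  | .mul x y => by
      simp [FreeMagma.len, toT, len_toT x, len_toT y, Tree.numNodes]; omega

private lemma len_pos (x : FreeMagma Unit) : 1 ≤ x.len := by
  rw [len_toT]; omega

private lemma cnt_univ_succ (n : ℕ) :
    cnt (Set.univ : Set (FreeMagma Unit)) (n + 1) = catalan n := by
  rw [cnt, ← BinaryTree.treesOfNumNodesEq_card_eq_catalan n, ← Nat.card_eq_finsetCard]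
  apply Nat.card_congr
  refine (magmaTreeEquiv.subtypeEquiv fun x => ?_)
  simp [magmaTreeEquiv, len_toT, BinaryTree.mem_treesOfNumNodesEq]

private lemma cnt_zero (X : Set (FreeMagma Unit)) : cnt X 0 = 0 := by
  rw [cnt]
  have : IsEmpty {x : FreeMagma Unit // x ∈ X ∧ x.len = 0} := by
    constructor; rintro ⟨x, -, hx⟩; have := len_pos x; omega
  simp

private lemma finite_len_le (n : ℕ) : {x : FreeMagma Unit | x.len ≤ n}.Finite := by
  have : {x : FreeMagma Unit | x.len ≤ n} ⊆
      magmaTreeEquiv ⁻¹' ↑((Finset.range n).biUnion Tree.treesOfNumNodesEq) := by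
    intro x hx
    simp only [Set.mem_preimage, Finset.coe_biUnion, Finset.mem_coe, Finset.mem_range,
      Set.mem_iUnion, BinaryTree.mem_treesOfNumNodesEq]
    refine ⟨(toT x).numNodes, ?_, rfl⟩
    have := hx; have := len_toT x; simp only [Set.mem_setOf_eq] at hx; omega
  exact Set.Finite.subset (Set.Finite.preimage magmaTreeEquiv.injective.injOn
    ((Finset.range n).biUnion Tree.treesOfNumNodesEq).finite_toSet) this

private lemma cntLe_zero (X : Set (FreeMagma Unit)) : cntLe X 0 = 0 := by
  rw [cntLe]
  have : IsEmpty {x : FreeMagma Unit // x ∈ X ∧ x.len ≤ 0} := by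
    constructor; rintro ⟨x, -, hx⟩; have := len_pos x; omega
  exact Nat.card_of_isEmpty

private lemma cntLe_succ (X : Set (FreeMagma Unit)) (n : ℕ) :
    cntLe X (n + 1) = cntLe X n + cnt X (n + 1) := by
  have h1 : {x : FreeMagma Unit | x ∈ X ∧ x.len ≤ n + 1} =
      {x : FreeMagma Unit | x ∈ X ∧ x.len ≤ n} ∪ {x : FreeMagma Unit | x ∈ X ∧ x.len = n + 1} := by
    ext x; simp only [Set.mem_setOf_eq, Set.mem_union]
    constructor
    · rintro ⟨h, hl⟩
      rcases eq_or_lt_of_le hl with h' | h'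
      · exact Or.inr ⟨h, h'⟩
      · exact Or.inl ⟨h, by omega⟩
    · rintro (⟨h, hl⟩ | ⟨h, hl⟩)
      exacts [⟨h, by omega⟩, ⟨h, by omega⟩]
  have hfa : {x : FreeMagma Unit | x ∈ X ∧ x.len ≤ n}.Finite :=
    (finite_len_le n).subset fun x hx => hx.2
  have hfb : {x : FreeMagma Unit | x ∈ X ∧ x.len = n + 1}.Finite :=
    (finite_len_le (n + 1)).subset fun x hx => le_of_eq hx.2
  have hd : Disjoint {x : FreeMagma Unit | x ∈ X ∧ x.len ≤ n}
      {x : FreeMagma Unit | x ∈ X ∧ x.len = n + 1} := by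
    rw [Set.disjoint_left]; rintro x ⟨-, h1⟩ ⟨-, h2⟩; omega
  have : cntLe X (n + 1) = ({x : FreeMagma Unit | x ∈ X ∧ x.len ≤ n + 1}).ncard := by
    rw [cntLe, ← Nat.card_coe_set_eq]; rfl
  rw [this, h1, Set.ncard_union_eq hd hfa hfb, cntLe, cnt,
    ← Nat.card_coe_set_eq, ← Nat.card_coe_set_eq]
  rfl

private lemma cnt_odd (k : ℕ) :
    cnt {x : FreeMagma Unit | 2 ∣ x.len} (2 * k + 1) = 0 := by
  rw [cnt]
  have : IsEmpty {x : FreeMagma Unit // x ∈ {x : FreeMagma Unit | 2 ∣ x.len} ∧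
      x.len = 2 * k + 1} := by
    constructor; rintro ⟨x, hx, hl⟩
    simp only [Set.mem_setOf_eq] at hx; omega
  exact Nat.card_of_isEmpty

private lemma cnt_even (k : ℕ) :
    cnt {x : FreeMagma Unit | 2 ∣ x.len} (2 * k + 2) = catalan (2 * k + 1) := by
  rw [← cnt_univ_succ (2 * k + 1), cnt, cnt]
  apply Nat.card_congr
  apply Equiv.subtypeEquivRight
  intro x
  simp only [Set.mem_setOf_eq, Set.mem_univ, true_and]
  constructor
  · rintro ⟨-, h⟩; omega
  · rintro h; exact ⟨by omega, by omega⟩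

private lemma cntLe_univ (n : ℕ) :
    cntLe (Set.univ : Set (FreeMagma Unit)) n = ∑ j ∈ Finset.range n, catalan j := by
  induction n with
  | zero => simpa using cntLe_zero _
  | succ n ih => rw [cntLe_succ, ih, cnt_univ_succ, Finset.sum_range_succ]

private lemma cntLe_L2_even (k : ℕ) :
    cntLe {x : FreeMagma Unit | 2 ∣ x.len} (2 * k) =
      ∑ i ∈ Finset.range k, catalan (2 * i + 1) := by
  induction k with
  | zero => simpa using cntLe_zero _
  | succ k ih =>
      have : 2 * (k + 1) = (2 * k + 1) + 1 := by ring
      rw [this, cntLe_succ, cntLe_succ, ih, cnt_odd, cnt_even, Finset.sum_range_succ]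
      · omega

private lemma cntLe_L2_odd (k : ℕ) :
    cntLe {x : FreeMagma Unit | 2 ∣ x.len} (2 * k + 1) =
      ∑ i ∈ Finset.range k, catalan (2 * i + 1) := by
  rw [cntLe_succ, cnt_odd, cntLe_L2_even]; omega

/-! ### Analysis: asymptotics of Catalan sums -/

private noncomputable def cc (n : ℕ) : ℝ := catalan n

private lemma catalan_pos' (n : ℕ) : 0 < catalan n := by
  have h := succ_mul_catalan_eq_centralBinom n
  have h2 := n.centralBinom_pos
  rcases Nat.eq_zero_or_pos (catalan n) with h0 | h0
  · rw [h0, Nat.mul_zero] at h; omega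
  · exact h0

private lemma cc_pos (n : ℕ) : 0 < cc n := by
  unfold cc; exact_mod_cast catalan_pos' n

private lemma catalan_rec (n : ℕ) :
    (n + 2) * catalan (n + 1) = (4 * n + 2) * catalan n := by
  have h1 := succ_mul_catalan_eq_centralBinom (n + 1)
  have h2 := succ_mul_catalan_eq_centralBinom n
  have h3 := Nat.succ_mul_centralBinom_succ n
  have key : (n + 1) * ((n + 2) * catalan (n + 1)) = (n + 1) * ((4 * n + 2) * catalan n) := by
    calc (n + 1) * ((n + 2) * catalan (n + 1)) = (n + 1) * ((n + 1 + 1) * catalan (n + 1)) := by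
          ring
      _ = (n + 1) * Nat.centralBinom (n + 1) := by rw [h1]
      _ = 2 * (2 * n + 1) * Nat.centralBinom n := h3
      _ = 2 * (2 * n + 1) * ((n + 1) * catalan n) := by rw [h2]
      _ = (n + 1) * ((4 * n + 2) * catalan n) := by ring
  exact Nat.eq_of_mul_eq_mul_left (by omega) key

private lemma cc_rec (n : ℕ) : ((n : ℝ) + 2) * cc (n + 1) = (4 * n + 2) * cc n := by
  have h := catalan_rec n
  have h2 : ((((n + 2) * catalan (n + 1) : ℕ)) : ℝ) = (((4 * n + 2) * catalan n : ℕ) : ℝ) := by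
    rw [h]
  push_cast at h2
  unfold cc
  linarith

private lemma cc_mono (n : ℕ) : cc n ≤ cc (n + 1) := by
  have h := cc_rec n
  have h1 := cc_pos n
  have h2 := cc_pos (n + 1)
  have hn : (0 : ℝ) ≤ (n : ℝ) := Nat.cast_nonneg n
  nlinarith

private lemma cc_double {n : ℕ} (hn : 1 ≤ n) : 2 * cc n ≤ cc (n + 1) := by
  have h := cc_rec n
  have h1 := cc_pos n
  have h2 := cc_pos (n + 1)
  have hn' : (1 : ℝ) ≤ (n : ℝ) := by exact_mod_cast hn
  nlinarith

private lemma cc_bound : ∀ (k n : ℕ), cc n ≤ 2 * (1 / 2) ^ k * cc (n + k) := by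
  intro k
  induction k with
  | zero => intro n; have := cc_pos n; simp; nlinarith
  | succ k ih =>
      intro n
      rcases Nat.eq_zero_or_pos (n + k) with h0 | h0
      · obtain ⟨hn, hk⟩ : n = 0 ∧ k = 0 := by omega
        subst hn; subst hk
        have : cc 0 = 1 := by unfold cc; rw [catalan_zero]; norm_num
        have h1 : cc 1 = 1 := by unfold cc; rw [catalan_one]; norm_num
        rw [this, h1]; norm_num
      · have step := cc_double h0
        have := ih n
        have hp : (0 : ℝ) < (1 / 2 : ℝ) ^ k := by positivity
        have : cc n ≤ 2 * (1 / 2) ^ k * ((1 / 2) * cc (n + k + 1)) := by nlinarith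
        calc cc n ≤ 2 * (1 / 2) ^ k * ((1 / 2) * cc (n + k + 1)) := this
          _ = 2 * (1 / 2) ^ (k + 1) * cc (n + (k + 1)) := by
              rw [pow_succ]; ring_nf

private lemma cc_ratio_eq (n : ℕ) : cc n / cc (n + 1) = ((n : ℝ) + 2) / (4 * n + 2) := by
  have h := cc_rec n
  have h2 := (cc_pos (n + 1)).ne'
  have h3 : (4 * (n : ℝ) + 2) ≠ 0 := by positivity
  field_simp
  linarith

private lemma q_lim : Tendsto (fun n : ℕ => cc n / cc (n + 1)) atTop (nhds (1 / 4)) := by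
  have heq : ∀ n : ℕ, 1 ≤ n → cc n / cc (n + 1) = (1 + 2 / n) / (4 + 2 / n) := by
    intro n hn
    have hn0 : (n : ℝ) ≠ 0 := by positivity
    rw [cc_ratio_eq]
    field_simp
  have h2 : Tendsto (fun n : ℕ => 2 / (n : ℝ)) atTop (nhds 0) :=
    tendsto_const_div_atTop_nhds_zero_nat 2
  have hlim : Tendsto (fun n : ℕ => (1 + 2 / (n : ℝ)) / (4 + 2 / n)) atTop
      (nhds ((1 + 0) / (4 + 0))) :=
    ((tendsto_const_nhds.add h2).div (tendsto_const_nhds.add h2) (by norm_num))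
  have : ((1 : ℝ) + 0) / (4 + 0) = 1 / 4 := by norm_num
  rw [this] at hlim
  apply hlim.congr'
  filter_upwards [eventually_ge_atTop 1] with n hn
  exact (heq n hn).symm

private lemma ratio_lim (j : ℕ) :
    Tendsto (fun n : ℕ => cc n / cc (n + j)) atTop (nhds ((1 / 4) ^ j)) := by
  induction j with
  | zero =>
      have h : (fun n : ℕ => cc n / cc (n + 0)) = fun _ => 1 := funext fun n => by
        rw [Nat.add_zero, div_self (cc_pos n).ne']
      rw [h, pow_zero]
      exact tendsto_const_nhds
  | succ j ih =>
      have heq : ∀ n : ℕ, cc n / cc (n + (j + 1)) =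
          (cc n / cc (n + j)) * (cc (n + j) / cc (n + j + 1)) := by
        intro n
        rw [show n + (j + 1) = n + j + 1 from rfl,
          div_mul_div_cancel₀ (cc_pos (n + j)).ne']
      have h2 : Tendsto (fun n : ℕ => cc (n + j) / cc (n + j + 1)) atTop (nhds (1 / 4)) :=
        q_lim.comp (tendsto_add_atTop_nat j)
      have := ih.mul h2
      rw [← pow_succ] at this
      exact this.congr fun n => (heq n).symm

/-- Generic lemma: normalized partial sums of a sequence with geometric-type growth. -/
private lemma sum_div_lim (b : ℕ → ℝ) (ρ r : ℝ) (hρ0 : 0 ≤ ρ) (hρ1 : ρ < 1)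
    (hr0 : 0 ≤ r) (hr1 : r < 1)
    (hpos : ∀ n, 0 < b n)
    (hbd : ∀ k n, b n ≤ 2 * r ^ k * b (n + k))
    (hlim : ∀ k, Tendsto (fun n : ℕ => b n / b (n + k)) atTop (nhds (ρ ^ k))) :
    Tendsto (fun n : ℕ => (∑ j ∈ Finset.range (n + 1), b j) / b n) atTop
      (nhds ((1 - ρ)⁻¹)) := by
  set f : ℕ → ℕ → ℝ := fun n k => if k ≤ n then b (n - k) / b n else 0 with hf
  have htsum : ∀ n, ∑' k, f n k = (∑ j ∈ Finset.range (n + 1), b j) / b n := by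
    intro n
    have hsupp : ∀ k ∉ Finset.range (n + 1), f n k = 0 := by
      intro k hk; simp only [hf]; rw [if_neg]
      simp only [Finset.mem_range] at hk; omega
    rw [tsum_eq_sum hsupp]
    have h1 : ∀ k ∈ Finset.range (n + 1), f n k = b (n - k) / b n := by
      intro k hk; simp only [hf]; rw [if_pos]
      simp only [Finset.mem_range] at hk; omega
    rw [Finset.sum_congr rfl h1, ← Finset.sum_div]
    congr 1
    calc ∑ k ∈ Finset.range (n + 1), b (n - k)
        = ∑ k ∈ Finset.range (n + 1), b (n + 1 - 1 - k) :=
          Finset.sum_congr rfl fun k _ => by congr 1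
      _ = ∑ j ∈ Finset.range (n + 1), b j := Finset.sum_range_reflect (fun j => b j) (n + 1)
  have hpt : ∀ k, Tendsto (fun n => f n k) atTop (nhds (ρ ^ k)) := by
    intro k
    have h1 : Tendsto (fun n : ℕ => b (n - k) / b ((n - k) + k)) atTop (nhds (ρ ^ k)) :=
      (hlim k).comp (tendsto_sub_atTop_nat k)
    apply h1.congr'
    filter_upwards [eventually_ge_atTop k] with n hn
    simp only [hf]
    rw [if_pos hn, Nat.sub_add_cancel hn]
  have hbound : ∀ n k, ‖f n k‖ ≤ 2 * r ^ k := by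
    intro n k
    have hrk : (0 : ℝ) ≤ 2 * r ^ k := mul_nonneg (by norm_num) (pow_nonneg hr0 k)
    simp only [hf]
    split_ifs with h
    · rw [Real.norm_eq_abs, abs_of_nonneg (div_nonneg (hpos _).le (hpos _).le),
        div_le_iff₀ (hpos n)]
      have := hbd k (n - k)
      rwa [Nat.sub_add_cancel h] at this
    · simpa using hrk
  have hsumm : Summable (fun k : ℕ => 2 * r ^ k) :=
    (summable_geometric_of_lt_one hr0 hr1).mul_left 2
  have main := tendsto_tsum_of_dominated_convergence (𝓕 := atTop) (f := f)
    (g := fun k => ρ ^ k) (bound := fun k => 2 * r ^ k) hsumm hpt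
    (Eventually.of_forall fun n k => hbound n k)
  rw [tsum_geometric_of_lt_one hρ0 hρ1] at main
  exact main.congr htsum

private lemma P_lim :
    Tendsto (fun n : ℕ => (∑ j ∈ Finset.range (n + 1), cc j) / cc n) atTop (nhds (4 / 3)) := by
  have h := sum_div_lim cc (1 / 4) (1 / 2) (by norm_num) (by norm_num) (by norm_num)
    (by norm_num) cc_pos (fun k n => cc_bound k n) ratio_lim
  have h2 : ((1 : ℝ) - 1 / 4)⁻¹ = 4 / 3 := by norm_num
  rwa [h2] at h

private lemma two_mul_add_one_tendsto : Tendsto (fun n : ℕ => 2 * n + 1) atTop atTop :=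
  tendsto_atTop_atTop.mpr fun m => ⟨m, fun a ha => by omega⟩

private lemma Q_lim :
    Tendsto (fun n : ℕ => (∑ i ∈ Finset.range (n + 1), cc (2 * i + 1)) / cc (2 * n + 1)) atTop
      (nhds (16 / 15)) := by
  have h := sum_div_lim (fun n => cc (2 * n + 1)) (1 / 16) (1 / 4) (by norm_num) (by norm_num)
    (by norm_num) (by norm_num) (fun n => cc_pos _)
    (fun k n => by
      have := cc_bound (2 * k) (2 * n + 1)
      have he : (2 * n + 1) + 2 * k = 2 * (n + k) + 1 := by omega
      rw [he] at this
      have hp : ((1 : ℝ) / 2) ^ (2 * k) = (1 / 4) ^ k := by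
        rw [pow_mul]; norm_num
      rwa [hp] at this)
    (fun k => by
      have h1 : Tendsto (fun n : ℕ => cc n / cc (n + 2 * k)) atTop (nhds ((1 / 4) ^ (2 * k))) :=
        ratio_lim (2 * k)
      have h2 := h1.comp two_mul_add_one_tendsto
      have hp : ((1 : ℝ) / 4) ^ (2 * k) = (1 / 16) ^ k := by
        rw [pow_mul]; norm_num
      rw [hp] at h2
      apply h2.congr
      intro n
      simp only [Function.comp_def]
      congr 2
      omega)
  have h2 : ((1 : ℝ) - 1 / 16)⁻¹ = 16 / 15 := by norm_num
  rwa [h2] at h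

/-! ### Casting to ℝ -/

private lemma castA (n : ℕ) :
    ((cntLe (Set.univ : Set (FreeMagma Unit)) n : ℕ) : ℝ) = ∑ j ∈ Finset.range n, cc j := by
  rw [cntLe_univ]; push_cast; rfl

private lemma castBe (k : ℕ) :
    ((cntLe {x : FreeMagma Unit | 2 ∣ x.len} (2 * k) : ℕ) : ℝ) =
      ∑ i ∈ Finset.range k, cc (2 * i + 1) := by
  rw [cntLe_L2_even]; push_cast; rfl

private lemma castBo (k : ℕ) :
    ((cntLe {x : FreeMagma Unit | 2 ∣ x.len} (2 * k + 1) : ℕ) : ℝ) =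
      ∑ i ∈ Finset.range k, cc (2 * i + 1) := by
  rw [cntLe_L2_odd]; push_cast; rfl

private lemma sumA_pos (n : ℕ) (hn : 0 < n) : (0 : ℝ) < ∑ j ∈ Finset.range n, cc j :=
  Finset.sum_pos (fun j _ => cc_pos j) ⟨0, Finset.mem_range.mpr hn⟩

private lemma even_lim :
    Tendsto (fun k =>
        (cntLe {x : FreeMagma Unit | 2 ∣ x.len} (2 * k) : ℝ) /
          (cntLe (Set.univ : Set (FreeMagma Unit)) (2 * k) : ℝ))
      atTop (nhds (4 / 5)) := by
  apply (tendsto_add_atTop_iff_nat 1).mp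
  have hP := P_lim.comp two_mul_add_one_tendsto
  have hdiv := Q_lim.div hP (by norm_num)
  have hval : (16 / 15 : ℝ) / (4 / 3) = 4 / 5 := by norm_num
  rw [hval] at hdiv
  apply hdiv.congr
  intro m
  simp only [Function.comp_def, Pi.div_apply]
  rw [castBe, castA]
  have hc := (cc_pos (2 * m + 1)).ne'
  have hS2 := (sumA_pos (2 * m + 1 + 1) (by omega)).ne'
  have hidx : 2 * (m + 1) = 2 * m + 1 + 1 := by ring
  rw [hidx]
  field_simp

private lemma odd_lim :
    Tendsto (fun k =>
        (cntLe {x : FreeMagma Unit | 2 ∣ x.len} (2 * k + 1) : ℝ) /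
          (cntLe (Set.univ : Set (FreeMagma Unit)) (2 * k + 1) : ℝ))
      atTop (nhds (1 / 5)) := by
  apply (tendsto_add_atTop_iff_nat 1).mp
  have h2m2 : Tendsto (fun m : ℕ => 2 * m + 2) atTop atTop :=
    tendsto_atTop_atTop.mpr fun m => ⟨m, fun a ha => by omega⟩
  have hP := P_lim.comp h2m2
  have hq := q_lim.comp two_mul_add_one_tendsto
  have hdiv := (Q_lim.mul hq).div hP (by norm_num)
  have hval : ((16 / 15 : ℝ) * (1 / 4)) / (4 / 3) = 1 / 5 := by norm_num
  rw [hval] at hdiv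
  apply hdiv.congr
  intro m
  simp only [Function.comp_def, Pi.div_apply]
  rw [castBo, castA]
  have hc1 := (cc_pos (2 * m + 1)).ne'
  have hc2 := (cc_pos (2 * m + 2)).ne'
  have hS2 := (sumA_pos (2 * m + 2 + 1) (by omega)).ne'
  have hidx : 2 * (m + 1) + 1 = 2 * m + 2 + 1 := by ring
  have hidx2 : 2 * m + 1 + 1 = 2 * m + 2 := by ring
  rw [hidx, hidx2]
  field_simp

theorem stmt_14 :
    Tendsto (fun k =>
        (cntLe {x : FreeMagma Unit | 2 ∣ x.len} (2 * k) : ℝ) /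
          (cntLe (Set.univ : Set (FreeMagma Unit)) (2 * k) : ℝ))
      atTop (nhds (4 / 5)) ∧
    Tendsto (fun k =>
        (cntLe {x : FreeMagma Unit | 2 ∣ x.len} (2 * k + 1) : ℝ) /
          (cntLe (Set.univ : Set (FreeMagma Unit)) (2 * k + 1) : ℝ))
      atTop (nhds (1 / 5)) ∧
    ¬∃ d : ℝ, Tendsto (fun n =>
        (cntLe {x : FreeMagma Unit | 2 ∣ x.len} n : ℝ) /
          (cntLe (Set.univ : Set (FreeMagma Unit)) n : ℝ))
      atTop (nhds d) := by
  refine ⟨even_lim, odd_lim, ?_⟩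
  rintro ⟨d, hd⟩
  have h2k : Tendsto (fun k : ℕ => 2 * k) atTop atTop :=
    tendsto_atTop_atTop.mpr fun m => ⟨m, fun a ha => by omega⟩
  have he : d = 4 / 5 :=
    tendsto_nhds_unique (hd.comp h2k) even_lim
  have ho : d = 1 / 5 :=
    tendsto_nhds_unique (hd.comp two_mul_add_one_tendsto) odd_lim
  rw [he] at ho
  norm_num at ho
end

section
/- If G is the minimal generating set of a subgroupoid N of the free magma on one generator, then the counting sequence of N is the Catalan transform of the counting sequence of G: |N|_n = |G|_n + Σ_{i+j=n, 0<i,j<n} |N|_i · |N|_j. -/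
open Filter

section Aux

open Set

lemma FreeMagma.len_pos {α : Type*} (x : FreeMagma α) : 0 < x.len := by
  induction x with
  | ih1 a => simp [FreeMagma.len]
  | ih2 y z ihy ihz => show 0 < y.len + z.len; omega

lemma FreeMagma.len_mul {α : Type*} (x y : FreeMagma α) :
    (x * y).len = x.len + y.len := rfl

lemma mul_inj {α : Type*} {x y x' y' : FreeMagma α} (h : x * y = x' * y') :
    x = x' ∧ y = y' := by
  have : FreeMagma.mul x y = FreeMagma.mul x' y' := h
  exact ⟨by injection this, by injection this⟩

lemma of_ne_mul {α : Type*} (a : α) (x y : FreeMagma α) :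
    FreeMagma.of a ≠ x * y := by
  intro h
  cases (show FreeMagma.of a = FreeMagma.mul x y from h)

lemma finite_len (n : ℕ) : {x : FreeMagma Unit | x.len = n}.Finite := by
  induction n using Nat.strong_induction_on with
  | _ n ih =>
    have hsub : {x : FreeMagma Unit | x.len = n} ⊆
        {FreeMagma.of ()} ∪ ⋃ i ∈ Finset.Ioo 0 n,
          (fun p : FreeMagma Unit × FreeMagma Unit => p.1 * p.2) ''
            ({x | x.len = i} ×ˢ {x | x.len = n - i}) := by
      intro x hx
      cases x with
      | of a => left; simp
      | mul y z =>
        right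
        have hy := y.len_pos
        have hz := z.len_pos
        have hlen : y.len + z.len = n := hx
        refine Set.mem_biUnion (show y.len ∈ Finset.Ioo 0 n by
          simp [Finset.mem_Ioo]; omega) ?_
        exact ⟨(y, z), ⟨rfl, by simp only [Set.mem_setOf_eq]; omega⟩, rfl⟩
    refine Set.Finite.subset (Set.Finite.union (Set.finite_singleton _) ?_) hsub
    refine Set.Finite.biUnion (Finset.Ioo 0 n).finite_toSet fun i hi => ?_
    simp only [Finset.coe_Ioo, Set.mem_Ioo] at hi
    exact Set.Finite.image _ ((ih i (by omega)).prod (ih (n - i) (by omega)))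

lemma ncard_prod {α : Type*} (s t : Set α) : (s ×ˢ t).ncard = s.ncard * t.ncard := by
  rw [← Nat.card_coe_set_eq, ← Nat.card_coe_set_eq, ← Nat.card_coe_set_eq]
  rw [Nat.card_congr (Equiv.Set.prod s t), Nat.card_prod]

lemma ncard_biUnion {α : Type*} (s : Finset ℕ) (f : ℕ → Set α)
    (hf : ∀ i ∈ s, (f i).Finite)
    (hd : ∀ i ∈ s, ∀ j ∈ s, i ≠ j → Disjoint (f i) (f j)) :
    (⋃ i ∈ s, f i).ncard = ∑ i ∈ s, (f i).ncard := by
  classical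
  induction s using Finset.induction_on with
  | empty => simp
  | @insert a s ha ih =>
    have hrest : (⋃ i ∈ s, f i).Finite := by
      exact Set.Finite.biUnion s.finite_toSet fun i hi => hf i (Finset.mem_insert_of_mem hi)
    have hdis : Disjoint (f a) (⋃ i ∈ s, f i) := by
      refine Set.disjoint_iUnion_right.2 fun i => Set.disjoint_iUnion_right.2 fun hi => ?_
      exact hd a (Finset.mem_insert_self a s) i (Finset.mem_insert_of_mem hi)
        (fun h => ha (h ▸ hi))
    rw [Finset.set_biUnion_insert, Finset.sum_insert ha,
      Set.ncard_union_eq hdis (hf a (Finset.mem_insert_self a s)) hrest,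
      ih (fun i hi => hf i (Finset.mem_insert_of_mem hi))
        (fun i hi j hj hij => hd i (Finset.mem_insert_of_mem hi) j
          (Finset.mem_insert_of_mem hj) hij)]

end Aux

theorem stmt_18 (N : Subsemigroup (FreeMagma Unit))
    (G : Set (FreeMagma Unit)) (hgen : Subsemigroup.closure G = N)
    (hmin : ∀ G' : Set (FreeMagma Unit), Subsemigroup.closure G' = N → G ⊆ G')
    (n : ℕ) (hn : 1 ≤ n) :
    cnt (N : Set (FreeMagma Unit)) n =
      cnt G n + ∑ i ∈ Finset.Ioo 0 n,
        cnt (N : Set (FreeMagma Unit)) i * cnt (N : Set (FreeMagma Unit)) (n - i) := by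
  classical
  -- the set of products of two elements of N
  set P : Set (FreeMagma Unit) := {z | ∃ x ∈ N, ∃ y ∈ N, x * y = z} with hP
  have hPN : P ⊆ (N : Set (FreeMagma Unit)) := by
    rintro z ⟨x, hx, y, hy, rfl⟩
    exact mul_mem hx hy
  have hGN : G ⊆ (N : Set (FreeMagma Unit)) := by
    intro g hg
    have := Subsemigroup.subset_closure hg
    rwa [hgen] at this
  -- N \ P generates N
  have hNP : Subsemigroup.closure ((N : Set (FreeMagma Unit)) \ P) = N := by
    apply le_antisymm
    · exact Subsemigroup.closure_le.2 Set.diff_subset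
    · intro z hz
      induction z with
      | ih1 a =>
        apply Subsemigroup.subset_closure
        refine ⟨hz, ?_⟩
        rintro ⟨x, _, y, _, hxy⟩
        exact of_ne_mul a x y hxy.symm
      | ih2 x y ihx ihy =>
        by_cases hxy : x * y ∈ P
        · obtain ⟨a, ha, b, hb, hab⟩ := hxy
          obtain ⟨rfl, rfl⟩ := mul_inj hab.symm
          exact mul_mem (ihx ha) (ihy hb)
        · exact Subsemigroup.subset_closure ⟨hz, hxy⟩
  -- G = N \ P
  have hG : G = (N : Set (FreeMagma Unit)) \ P := by
    apply Set.Subset.antisymm (hmin _ hNP)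
    -- G ∪ P is a subsemigroup containing G, so N ⊆ G ∪ P
    have hT : ∀ z ∈ N, z ∈ G ∪ P := by
      have : Subsemigroup.closure G ≤
          ⟨G ∪ P, by
            rintro a b (ha | ha) (hb | hb) <;>
              exact Or.inr ⟨a, by first | exact hGN ha | exact hPN ha,
                b, by first | exact hGN hb | exact hPN hb, rfl⟩⟩ :=
        Subsemigroup.closure_le.2 Set.subset_union_left
      intro z hz
      exact this (hgen ▸ hz : z ∈ Subsemigroup.closure G)
    rintro z ⟨hzN, hzP⟩
    rcases hT z hzN with h | h
    · exact h
    · exact absurd h hzP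
  -- counting sets
  set S : ℕ → Set (FreeMagma Unit) := fun i => {x | x ∈ N ∧ x.len = i} with hS
  set Gn : Set (FreeMagma Unit) := {x | x ∈ G ∧ x.len = n} with hGn
  set C : ℕ → Set (FreeMagma Unit) := fun i =>
    (fun p : FreeMagma Unit × FreeMagma Unit => p.1 * p.2) '' (S i ×ˢ S (n - i)) with hC
  have hSfin : ∀ i, (S i).Finite := fun i =>
    (finite_len i).subset fun x hx => hx.2
  have hGfin : Gn.Finite := (finite_len n).subset fun x hx => hx.2
  have hCfin : ∀ i, (C i).Finite := fun i =>
    Set.Finite.image _ ((hSfin i).prod (hSfin (n - i)))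
  -- decomposition
  have hdecomp : S n = Gn ∪ ⋃ i ∈ Finset.Ioo 0 n, C i := by
    apply Set.Subset.antisymm
    · rintro z ⟨hzN, hzlen⟩
      by_cases hzG : z ∈ G
      · exact Or.inl ⟨hzG, hzlen⟩
      · have hzP : z ∈ P := by
          by_contra h
          exact hzG (hG ▸ (⟨hzN, h⟩ : z ∈ (N : Set (FreeMagma Unit)) \ P))
        obtain ⟨x, hx, y, hy, rfl⟩ := hzP
        right
        have hx1 := x.len_pos
        have hy1 := y.len_pos
        have hlen : x.len + y.len = n := hzlen
        refine Set.mem_biUnion (show x.len ∈ Finset.Ioo 0 n by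
          simp [Finset.mem_Ioo]; omega) ?_
        exact ⟨(x, y), ⟨⟨hx, rfl⟩, ⟨hy, show y.len = n - x.len by omega⟩⟩, rfl⟩
    · rintro z (⟨hzG, hzlen⟩ | hz)
      · exact ⟨hGN hzG, hzlen⟩
      · simp only [Set.mem_iUnion] at hz
        obtain ⟨i, hi, ⟨x, y⟩, hmem, rfl⟩ := hz
        simp only [Set.mem_prod, Set.mem_setOf_eq] at hmem
        obtain ⟨⟨hx, hxl⟩, hy, hyl⟩ := hmem
        simp only [Finset.mem_Ioo] at hi
        refine ⟨mul_mem hx hy, ?_⟩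
        show x.len + y.len = n
        omega
  -- disjointness of Gn and the union
  have hdisj : Disjoint Gn (⋃ i ∈ Finset.Ioo 0 n, C i) := by
    rw [Set.disjoint_left]
    rintro z ⟨hzG, _⟩ hz
    simp only [Set.mem_iUnion] at hz
    obtain ⟨i, hi, ⟨x, y⟩, ⟨⟨hx, _⟩, ⟨hy, _⟩⟩, rfl⟩ := hz
    have : x * y ∈ P := ⟨x, hx, y, hy, rfl⟩
    exact (hG ▸ hzG : x * y ∈ (N : Set (FreeMagma Unit)) \ P).2 this
  -- pairwise disjointness of C i
  have hCdisj : ∀ i ∈ Finset.Ioo 0 n, ∀ j ∈ Finset.Ioo 0 n, i ≠ j →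
      Disjoint (C i) (C j) := by
    intro i _ j _ hij
    rw [Set.disjoint_left]
    rintro z ⟨⟨x, y⟩, ⟨⟨_, hxl⟩, _⟩, rfl⟩ ⟨⟨x', y'⟩, ⟨⟨_, hxl'⟩, _⟩, h⟩
    obtain ⟨rfl, rfl⟩ := mul_inj h
    exact hij (hxl ▸ hxl')
  -- cnt as ncard
  have hcnt : ∀ (X : Set (FreeMagma Unit)) (m : ℕ),
      cnt X m = ({x | x ∈ X ∧ x.len = m} : Set (FreeMagma Unit)).ncard := by
    intro X m
    exact Nat.card_coe_set_eq {x | x ∈ X ∧ x.len = m}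
  have key : (S n).ncard = Gn.ncard + ∑ i ∈ Finset.Ioo 0 n, (C i).ncard := by
    rw [hdecomp, Set.ncard_union_eq hdisj hGfin
      (Set.Finite.biUnion (Finset.Ioo 0 n).finite_toSet fun i _ => hCfin i),
      ncard_biUnion _ _ (fun i _ => hCfin i) hCdisj]
  have hCcard : ∀ i, (C i).ncard = (S i).ncard * (S (n - i)).ncard := by
    intro i
    rw [hC]
    rw [Set.ncard_image_of_injOn, ncard_prod]
    rintro ⟨x, y⟩ _ ⟨x', y'⟩ _ h
    obtain ⟨rfl, rfl⟩ := mul_inj h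
    rfl
  calc cnt (N : Set (FreeMagma Unit)) n = (S n).ncard := hcnt _ n
    _ = Gn.ncard + ∑ i ∈ Finset.Ioo 0 n, (C i).ncard := key
    _ = cnt G n + ∑ i ∈ Finset.Ioo 0 n,
        cnt (N : Set (FreeMagma Unit)) i * cnt (N : Set (FreeMagma Unit)) (n - i) := by
      rw [hcnt G n]
      congr 1
      apply Finset.sum_congr rfl
      intro i _
      rw [hCcard i, hcnt _ i, hcnt _ (n - i)]
      rfl
end
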